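/- Let k be a field, let p ≥ 1 and r ≥ 0 be integers, and work in R = k[x,y,z,w]. Let J = (x², x y², x y z^{p−1}, x y w^{r+p−2}, y^{p+2}, y^{p+1} w^{r+p−2} + x z^{r+2p−2}) and I = (x², x y, y^{p+2}, y^{p+1} w^{r+p−2} + x z^{r+2p−2}). Then J ⊆ I, and I is the saturation of J with respect to the irrelevant maximal ideal (x,y,z,w); in particular I is a saturated homogeneous ideal. -/

import Mathlib

open MvPolynomial
noncomputable section NolletAux
variable {k : Type*} [Field k]

private def e1 : MvPolynomial (Fin 4) k ≃ₐ[k] Polynomial (MvPolynomial (Fin 3) k) :=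
  MvPolynomial.finSuccEquiv k 3
private def e2 : MvPolynomial (Fin 3) k ≃ₐ[k] Polynomial (MvPolynomial (Fin 2) k) :=
  MvPolynomial.finSuccEquiv k 2
private def E (i j : ℕ) (f : MvPolynomial (Fin 4) k) : MvPolynomial (Fin 2) k :=
  ((e2 (((e1 : MvPolynomial (Fin 4) k ≃ₐ[k] _) f).coeff i)).coeff j)

private lemma e1_x : (e1 : MvPolynomial (Fin 4) k ≃ₐ[k] _) (X 0) = Polynomial.X :=
  finSuccEquiv_X_zero
private lemma e1_y : (e1 : MvPolynomial (Fin 4) k ≃ₐ[k] _) (X 1) = Polynomial.C (X 0) := by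
  have h : (1 : Fin 4) = Fin.succ 0 := rfl
  rw [h]; exact finSuccEquiv_X_succ
private lemma e1_z : (e1 : MvPolynomial (Fin 4) k ≃ₐ[k] _) (X 2) = Polynomial.C (X 1) := by
  have h : (2 : Fin 4) = Fin.succ 1 := rfl
  rw [h]; exact finSuccEquiv_X_succ
private lemma e1_w : (e1 : MvPolynomial (Fin 4) k ≃ₐ[k] _) (X 3) = Polynomial.C (X 2) := by
  have h : (3 : Fin 4) = Fin.succ 2 := rfl
  rw [h]; exact finSuccEquiv_X_succ
private lemma e2_y : (e2 : MvPolynomial (Fin 3) k ≃ₐ[k] _) (X 0) = Polynomial.X :=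
  finSuccEquiv_X_zero
private lemma e2_z : (e2 : MvPolynomial (Fin 3) k ≃ₐ[k] _) (X 1) = Polynomial.C (X 0) := by
  have h : (1 : Fin 3) = Fin.succ 0 := rfl
  rw [h]; exact finSuccEquiv_X_succ
private lemma e2_w : (e2 : MvPolynomial (Fin 3) k ≃ₐ[k] _) (X 2) = Polynomial.C (X 1) := by
  have h : (2 : Fin 3) = Fin.succ 1 := rfl
  rw [h]; exact finSuccEquiv_X_succ

private lemma E_add (i j : ℕ) (f g : MvPolynomial (Fin 4) k) :
    E i j (f + g) = E i j f + E i j g := by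
  simp [E, Polynomial.coeff_add]

private lemma E_sub (i j : ℕ) (f g : MvPolynomial (Fin 4) k) :
    E i j (f - g) = E i j f - E i j g := by
  simp [E, Polynomial.coeff_sub]

-- multiples of x^2
private lemma E_x2 (i j : ℕ) (hi : i < 2) (a : MvPolynomial (Fin 4) k) :
    E i j (a * X 0 ^ 2) = 0 := by
  simp only [E, map_mul, map_pow, e1_x, Polynomial.coeff_mul_X_pow', if_neg (not_le.2 hi)]
  simp

-- multiples of x*y
private lemma E_xy_0 (j : ℕ) (a : MvPolynomial (Fin 4) k) :
    E 0 j (a * (X 0 * X 1)) = 0 := by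
  have h : (e1 : MvPolynomial (Fin 4) k ≃ₐ[k] _) (a * (X 0 * X 1))
      = ((e1 : MvPolynomial (Fin 4) k ≃ₐ[k] _) a * Polynomial.C (X 0)) * Polynomial.X ^ 1 := by
    simp only [map_mul, e1_x, e1_y]; ring
  simp only [E, h, Polynomial.coeff_mul_X_pow']
  simp

private lemma E_xy_1 (a : MvPolynomial (Fin 4) k) :
    E 1 0 (a * (X 0 * X 1)) = 0 := by
  have h : (e1 : MvPolynomial (Fin 4) k ≃ₐ[k] _) (a * (X 0 * X 1))
      = ((e1 : MvPolynomial (Fin 4) k ≃ₐ[k] _) a * Polynomial.C (X 0)) * Polynomial.X ^ 1 := by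
    simp only [map_mul, e1_x, e1_y]; ring
  simp only [E, h, Polynomial.coeff_mul_X_pow', if_pos (le_refl 1)]
  rw [Nat.sub_self, Polynomial.coeff_mul_C, map_mul, e2_y, Polynomial.coeff_mul_X_zero]

-- multiples of y^(p+2)
private lemma E_yp2 (m i j : ℕ) (hj : j < m) (a : MvPolynomial (Fin 4) k) :
    E i j (a * X 1 ^ m) = 0 := by
  have h : (e1 : MvPolynomial (Fin 4) k ≃ₐ[k] _) (a * X 1 ^ m)
      = (e1 : MvPolynomial (Fin 4) k ≃ₐ[k] _) a * Polynomial.C (X 0 ^ m) := by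
    rw [map_mul, map_pow, e1_y, ← map_pow]
  simp only [E, h, Polynomial.coeff_mul_C]
  rw [map_mul, map_pow, e2_y, Polynomial.coeff_mul_X_pow', if_neg (not_le.2 hj)]


-- multiples of g = y^(p+1) w^s + x z^t
private lemma e1_g (p s t : ℕ) (a : MvPolynomial (Fin 4) k) :
    (e1 : MvPolynomial (Fin 4) k ≃ₐ[k] _) (a * (X 1 ^ (p+1) * X 3 ^ s + X 0 * X 2 ^ t))
      = (e1 : MvPolynomial (Fin 4) k ≃ₐ[k] _) a * Polynomial.C (X 0 ^ (p+1) * X 2 ^ s)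
        + ((e1 : MvPolynomial (Fin 4) k ≃ₐ[k] _) a * Polynomial.C (X 1 ^ t)) * Polynomial.X ^ 1 := by
  rw [map_mul, map_add, map_mul, map_mul, map_pow, map_pow, map_pow, e1_x, e1_y, e1_z, e1_w,
    ← map_pow, ← map_pow, ← map_pow, ← map_mul]
  ring

private lemma e1_g_c0 (p s t : ℕ) (a : MvPolynomial (Fin 4) k) :
    ((e1 : MvPolynomial (Fin 4) k ≃ₐ[k] _) (a * (X 1 ^ (p+1) * X 3 ^ s + X 0 * X 2 ^ t))).coeff 0
      = ((e1 : MvPolynomial (Fin 4) k ≃ₐ[k] _) a).coeff 0 * (X 0 ^ (p+1) * X 2 ^ s) := by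
  rw [e1_g, Polynomial.coeff_add, Polynomial.coeff_mul_C,
    Polynomial.coeff_mul_X_pow', if_neg (by norm_num), add_zero]

private lemma e2_c0 (p s : ℕ) (c : MvPolynomial (Fin 3) k) :
    (e2 : MvPolynomial (Fin 3) k ≃ₐ[k] _) (c * (X 0 ^ (p+1) * X 2 ^ s))
      = ((e2 : MvPolynomial (Fin 3) k ≃ₐ[k] _) c * Polynomial.C (X 1 ^ s)) * Polynomial.X ^ (p+1) := by
  rw [map_mul, map_mul, map_pow, map_pow, e2_y, e2_w, ← map_pow]
  ring

private lemma E_g_0 (p s t j : ℕ) (hj : j < p + 1) (a : MvPolynomial (Fin 4) k) :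
    E 0 j (a * (X 1 ^ (p+1) * X 3 ^ s + X 0 * X 2 ^ t)) = 0 := by
  simp only [E, e1_g_c0, e2_c0]
  rw [Polynomial.coeff_mul_X_pow', if_neg (not_le.2 hj)]

private lemma E_g_top (p s t : ℕ) (a : MvPolynomial (Fin 4) k) :
    E 0 (p+1) (a * (X 1 ^ (p+1) * X 3 ^ s + X 0 * X 2 ^ t)) = E 0 0 a * X 1 ^ s := by
  simp only [E, e1_g_c0, e2_c0]
  rw [Polynomial.coeff_mul_X_pow', if_pos (le_refl _), Nat.sub_self, Polynomial.coeff_mul_C]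

private lemma E_g_1 (p s t : ℕ) (a : MvPolynomial (Fin 4) k) :
    E 1 0 (a * (X 1 ^ (p+1) * X 3 ^ s + X 0 * X 2 ^ t)) = E 0 0 a * X 0 ^ t := by
  have h0 : ((e1 : MvPolynomial (Fin 4) k ≃ₐ[k] _) (a * (X 1 ^ (p+1) * X 3 ^ s + X 0 * X 2 ^ t))).coeff 1
      = ((e1 : MvPolynomial (Fin 4) k ≃ₐ[k] _) a).coeff 1 * (X 0 ^ (p+1) * X 2 ^ s)
        + ((e1 : MvPolynomial (Fin 4) k ≃ₐ[k] _) a).coeff 0 * X 1 ^ t := by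
    rw [e1_g, Polynomial.coeff_add, Polynomial.coeff_mul_C,
      Polynomial.coeff_mul_X_pow', if_pos (le_refl _), Nat.sub_self, Polynomial.coeff_mul_C]
  simp only [E, h0, map_add, Polynomial.coeff_add, e2_c0]
  rw [Polynomial.coeff_mul_X_pow', if_neg (by norm_num)]
  have h2 : (e2 : MvPolynomial (Fin 3) k ≃ₐ[k] _)
        (((e1 : MvPolynomial (Fin 4) k ≃ₐ[k] _) a).coeff 0 * X 1 ^ t)
      = (e2 : MvPolynomial (Fin 3) k ≃ₐ[k] _) (((e1 : MvPolynomial (Fin 4) k ≃ₐ[k] _) a).coeff 0)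
        * Polynomial.C (X 0 ^ t) := by
    rw [map_mul, map_pow, e2_z, ← map_pow]
  rw [h2, Polynomial.coeff_mul_C, zero_add]

private lemma E_zmul (i j : ℕ) (f : MvPolynomial (Fin 4) k) :
    E i j (X 2 * f) = X 0 * E i j f := by
  simp only [E, map_mul, e1_z, Polynomial.coeff_C_mul, map_mul, e2_z, Polynomial.coeff_C_mul]


private lemma e1s_X : (e1 : MvPolynomial (Fin 4) k ≃ₐ[k] _).symm Polynomial.X = X 0 := by
  rw [← e1_x, AlgEquiv.symm_apply_apply]
private lemma e1s_CY :
    (e1 : MvPolynomial (Fin 4) k ≃ₐ[k] _).symm (Polynomial.C (X 0)) = X 1 := by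
  rw [← e1_y, AlgEquiv.symm_apply_apply]
private lemma e2s_X : (e2 : MvPolynomial (Fin 3) k ≃ₐ[k] _).symm Polynomial.X = X 0 := by
  rw [← e2_y, AlgEquiv.symm_apply_apply]

private lemma mem_K_of_E (p : ℕ) (u : MvPolynomial (Fin 4) k)
    (h0 : ∀ j ≤ p + 1, E 0 j u = 0) (h1 : E 1 0 u = 0) :
    u ∈ Ideal.span {(X 0 : MvPolynomial (Fin 4) k) ^ 2, X 0 * X 1, X 1 ^ (p + 2)} := by
  set P : Polynomial (MvPolynomial (Fin 3) k) := (e1 : MvPolynomial (Fin 4) k ≃ₐ[k] _) u with hPdef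
  have hP : P = Polynomial.C (P.coeff 0) + Polynomial.C (P.coeff 1) * Polynomial.X
      + P.divX.divX * Polynomial.X ^ 2 := by
    have a1 := Polynomial.divX_mul_X_add P
    have a2 := Polynomial.divX_mul_X_add P.divX
    have a3 : P.divX.coeff 0 = P.coeff 1 := Polynomial.coeff_divX
    rw [a3] at a2
    calc P = P.divX * Polynomial.X + Polynomial.C (P.coeff 0) := a1.symm
    _ = (P.divX.divX * Polynomial.X + Polynomial.C (P.coeff 1)) * Polynomial.X
          + Polynomial.C (P.coeff 0) := by rw [a2]
    _ = _ := by ring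
  -- divisibility of the coefficients
  have d0 : Polynomial.X ^ (p + 2) ∣ (e2 : MvPolynomial (Fin 3) k ≃ₐ[k] _) (P.coeff 0) :=
    Polynomial.X_pow_dvd_iff.2 (fun d hd => h0 d (by omega))
  obtain ⟨q0, hq0⟩ := d0
  have d1 : Polynomial.X ∣ (e2 : MvPolynomial (Fin 3) k ≃ₐ[k] _) (P.coeff 1) :=
    Polynomial.X_dvd_iff.2 h1
  obtain ⟨q1, hq1⟩ := d1
  have c0 : P.coeff 0 = X 0 ^ (p + 2) *
      (e2 : MvPolynomial (Fin 3) k ≃ₐ[k] _).symm q0 := by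
    apply (e2 : MvPolynomial (Fin 3) k ≃ₐ[k] _).injective
    rw [hq0, map_mul, map_pow, e2_y, AlgEquiv.apply_symm_apply]
  have c1 : P.coeff 1 = X 0 *
      (e2 : MvPolynomial (Fin 3) k ≃ₐ[k] _).symm q1 := by
    apply (e2 : MvPolynomial (Fin 3) k ≃ₐ[k] _).injective
    rw [hq1, map_mul, e2_y, AlgEquiv.apply_symm_apply]
  have hu : u = X 1 ^ (p + 2) *
        (e1 : MvPolynomial (Fin 4) k ≃ₐ[k] _).symm
          (Polynomial.C ((e2 : MvPolynomial (Fin 3) k ≃ₐ[k] _).symm q0))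
      + (X 0 * X 1) *
        (e1 : MvPolynomial (Fin 4) k ≃ₐ[k] _).symm
          (Polynomial.C ((e2 : MvPolynomial (Fin 3) k ≃ₐ[k] _).symm q1))
      + X 0 ^ 2 * (e1 : MvPolynomial (Fin 4) k ≃ₐ[k] _).symm (P.divX.divX) := by
    have := congrArg ((e1 : MvPolynomial (Fin 4) k ≃ₐ[k] _).symm) hP
    rw [hPdef, AlgEquiv.symm_apply_apply] at this
    rw [this, c0, c1]
    simp only [Polynomial.C_mul, Polynomial.C_pow, map_add, map_mul, map_pow, e1s_X, e1s_CY]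
    ring
  rw [hu]
  refine Ideal.add_mem _ (Ideal.add_mem _ ?_ ?_) ?_
  · exact Ideal.mul_mem_right _ _ (Ideal.subset_span (by simp))
  · exact Ideal.mul_mem_right _ _ (Ideal.subset_span (by simp))
  · exact Ideal.mul_mem_right _ _ (Ideal.subset_span (by simp))

private def lift (h : MvPolynomial (Fin 2) k) : MvPolynomial (Fin 4) k :=
  (e1 : MvPolynomial (Fin 4) k ≃ₐ[k] _).symm
    (Polynomial.C ((e2 : MvPolynomial (Fin 3) k ≃ₐ[k] _).symm (Polynomial.C h)))

private lemma E_lift (h : MvPolynomial (Fin 2) k) : E 0 0 (lift h) = h := by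
  simp [E, lift, AlgEquiv.apply_symm_apply]

/-- The saturated ideal `I`. -/
private def Isat (p s t : ℕ) : Ideal (MvPolynomial (Fin 4) k) :=
  Ideal.span {X 0 ^ 2, X 0 * X 1, X 1 ^ (p + 2), X 1 ^ (p + 1) * X 3 ^ s + X 0 * X 2 ^ t}

private lemma mem_Isat_iff (p s t : ℕ) (f : MvPolynomial (Fin 4) k) :
    f ∈ Isat p s t ↔ ∃ h : MvPolynomial (Fin 2) k,
      (∀ j ≤ p, E 0 j f = 0) ∧ E 0 (p + 1) f = h * X 1 ^ s ∧ E 1 0 f = h * X 0 ^ t := by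
  constructor
  · intro hf
    rw [Isat, Ideal.mem_span_insert] at hf
    obtain ⟨a1, v1, hv1, rfl⟩ := hf
    rw [Ideal.mem_span_insert] at hv1
    obtain ⟨a2, v2, hv2, rfl⟩ := hv1
    rw [Ideal.mem_span_insert] at hv2
    obtain ⟨a3, v3, hv3, rfl⟩ := hv2
    rw [Ideal.mem_span_singleton'] at hv3
    obtain ⟨a4, rfl⟩ := hv3
    refine ⟨E 0 0 a4, fun j hj => ?_, ?_, ?_⟩
    · rw [E_add, E_add, E_add, E_x2 _ _ (by norm_num), E_xy_0, E_yp2 _ _ _ (by omega),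
        E_g_0 _ _ _ _ (by omega)]
      ring
    · rw [E_add, E_add, E_add, E_x2 _ _ (by norm_num), E_xy_0, E_yp2 _ _ _ (by omega),
        E_g_top]
      ring
    · rw [E_add, E_add, E_add, E_x2 _ _ (by norm_num), E_xy_1, E_yp2 _ _ _ (by omega),
        E_g_1]
      ring
  · rintro ⟨h, h0, h1, h2⟩
    have key : f - lift h * (X 1 ^ (p + 1) * X 3 ^ s + X 0 * X 2 ^ t)
        ∈ Ideal.span {(X 0 : MvPolynomial (Fin 4) k) ^ 2, X 0 * X 1, X 1 ^ (p + 2)} := by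
      apply mem_K_of_E p
      · intro j hj
        rcases Nat.lt_or_ge j (p + 1) with hlt | hge
        · rw [E_sub, E_g_0 _ _ _ _ hlt, h0 j (by omega), sub_zero]
        · have hj' : j = p + 1 := by omega
          rw [hj', E_sub, E_g_top, E_lift, h1, sub_self]
      · rw [E_sub, E_g_1, E_lift, h2, sub_self]
    have hKI : Ideal.span {(X 0 : MvPolynomial (Fin 4) k) ^ 2, X 0 * X 1, X 1 ^ (p + 2)}
        ≤ Isat p s t := by
      apply Ideal.span_mono
      intro v hv
      simp only [Set.mem_insert_iff, Set.mem_singleton_iff] at hv ⊢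
      tauto
    have h3 : lift h * (X 1 ^ (p + 1) * X 3 ^ s + X 0 * X 2 ^ t) ∈ Isat p s t :=
      Ideal.mul_mem_left _ _ (Ideal.subset_span (by simp))
    have := Ideal.add_mem _ (hKI key) h3
    simpa using this

private def e3 : MvPolynomial (Fin 2) k ≃ₐ[k] Polynomial (MvPolynomial (Fin 1) k) :=
  MvPolynomial.finSuccEquiv k 1

private lemma e3_z : (e3 : MvPolynomial (Fin 2) k ≃ₐ[k] _) (X 0) = Polynomial.X :=
  finSuccEquiv_X_zero
private lemma e3_w : (e3 : MvPolynomial (Fin 2) k ≃ₐ[k] _) (X 1) = Polynomial.C (X 0) := by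
  have h : (1 : Fin 2) = Fin.succ 0 := rfl
  rw [h]; exact finSuccEquiv_X_succ
private lemma e3s_X : (e3 : MvPolynomial (Fin 2) k ≃ₐ[k] _).symm Polynomial.X = X 0 := by
  rw [← e3_z, AlgEquiv.symm_apply_apply]

/-- The key saturation step: if `z * f ∈ I` then `f ∈ I`. -/
private lemma zmul_mem (p s t : ℕ) (f : MvPolynomial (Fin 4) k)
    (hf : X 2 * f ∈ Isat p s t) : f ∈ Isat p s t := by
  rw [mem_Isat_iff] at hf
  obtain ⟨h, h0, h1, h2⟩ := hf
  simp only [E_zmul] at h0 h1 h2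
  -- Step 1: z divides h
  have hz : (X 0 : MvPolynomial (Fin 2) k) ∣ h := by
    have := congrArg (e3 : MvPolynomial (Fin 2) k ≃ₐ[k] _) h1
    rw [map_mul, map_mul, map_pow, e3_z, e3_w, ← map_pow] at this
    have hc := congrArg (fun q => Polynomial.coeff q 0) this
    simp only [mul_comm Polynomial.X _, Polynomial.coeff_mul_X_zero,
      Polynomial.coeff_mul_C] at hc
    have hcoeff : ((e3 : MvPolynomial (Fin 2) k ≃ₐ[k] _) h).coeff 0 = 0 := by
      rcases mul_eq_zero.1 hc.symm with h' | h'
      · exact h'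
      · exact absurd h' (pow_ne_zero _ (X_ne_zero _))
    obtain ⟨q, hq⟩ := Polynomial.X_dvd_iff.2 hcoeff
    refine ⟨(e3 : MvPolynomial (Fin 2) k ≃ₐ[k] _).symm q, ?_⟩
    apply (e3 : MvPolynomial (Fin 2) k ≃ₐ[k] _).injective
    rw [hq, map_mul, e3_z, AlgEquiv.apply_symm_apply]
  obtain ⟨h', rfl⟩ := hz
  rw [mem_Isat_iff]
  refine ⟨h', fun j hj => ?_, ?_, ?_⟩
  · rcases mul_eq_zero.1 (h0 j hj) with h' | h'
    · exact absurd h' (X_ne_zero _)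
    · exact h'
  · apply mul_left_cancel₀ (X_ne_zero (0 : Fin 2))
    rw [h1]; ring
  · apply mul_left_cancel₀ (X_ne_zero (0 : Fin 2))
    rw [h2]; ring

private lemma ideal_add_pow_le {A : Type*} [CommRing A] (I J : Ideal A) (m n : ℕ) :
    (I + J) ^ (m + n) ≤ I ^ m + J ^ n := by
  rw [add_pow]
  apply Finset.sum_induction _ (fun a => a ≤ I ^ m + J ^ n)
  · intro a b ha hb
    rw [Submodule.add_eq_sup]
    exact sup_le ha hb
  · exact (Submodule.zero_eq_bot).le.trans bot_le
  · intro c _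
    have t1 : I ^ c * J ^ (m + n - c) * ((m + n).choose c : Ideal A)
        ≤ I ^ c * J ^ (m + n - c) := Ideal.mul_le_left
    rcases le_or_gt m c with hc | hc
    · refine t1.trans ((Ideal.mul_le_left.trans (Ideal.pow_le_pow_right hc)).trans ?_)
      rw [Submodule.add_eq_sup]; exact le_sup_left
    · have hc' : n ≤ m + n - c := by omega
      refine t1.trans ((Ideal.mul_le_right.trans (Ideal.pow_le_pow_right hc')).trans ?_)
      rw [Submodule.add_eq_sup]; exact le_sup_right
end NolletAux

/-- Nollet's ideal computation: `J ⊆ I`, and `I` is the saturation of `J` with respect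
to the irrelevant maximal ideal `(x,y,z,w)`; in particular `I` is saturated. -/
theorem stmt13 (k : Type*) [Field k] (p r : ℕ) (hp : 1 ≤ p) :
    let x : MvPolynomial (Fin 4) k := X 0
    let y : MvPolynomial (Fin 4) k := X 1
    let z : MvPolynomial (Fin 4) k := X 2
    let w : MvPolynomial (Fin 4) k := X 3
    let m : Ideal (MvPolynomial (Fin 4) k) := Ideal.span {x, y, z, w}
    let J : Ideal (MvPolynomial (Fin 4) k) := Ideal.span
      {x ^ 2, x * y ^ 2, x * y * z ^ (p - 1), x * y * w ^ (r + p - 2), y ^ (p + 2),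
        y ^ (p + 1) * w ^ (r + p - 2) + x * z ^ (r + 2 * p - 2)}
    let I : Ideal (MvPolynomial (Fin 4) k) := Ideal.span
      {x ^ 2, x * y, y ^ (p + 2), y ^ (p + 1) * w ^ (r + p - 2) + x * z ^ (r + 2 * p - 2)}
    J ≤ I ∧ I = ⨆ n : ℕ, J.colon ((m ^ n : Ideal (MvPolynomial (Fin 4) k)) : Set (MvPolynomial (Fin 4) k)) ∧ I.colon m = I := by
  intro x y z w m J I
  have hI : I = Isat p (r + p - 2) (r + 2 * p - 2) := rfl
  have key : ∀ f : MvPolynomial (Fin 4) k, z * f ∈ I → f ∈ I := by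
    intro f hf
    rw [hI] at hf ⊢
    exact zmul_mem _ _ _ f hf
  have hzm : z ∈ m := Ideal.subset_span (by simp)
  have hJI : J ≤ I := by
    rw [Ideal.span_le]
    intro v hv
    simp only [Set.mem_insert_iff, Set.mem_singleton_iff] at hv
    rw [SetLike.mem_coe]
    rcases hv with rfl | rfl | rfl | rfl | rfl | rfl
    · exact Ideal.subset_span (by simp)
    · rw [show x * y ^ 2 = x * y * y by ring]
      exact Ideal.mul_mem_right _ _ (Ideal.subset_span (by simp))
    · exact Ideal.mul_mem_right _ _ (Ideal.subset_span (by simp))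
    · exact Ideal.mul_mem_right _ _ (Ideal.subset_span (by simp))
    · exact Ideal.subset_span (by simp)
    · exact Ideal.subset_span (by simp)
  have JleC : ∀ n, J ≤ J.colon ((m ^ n : Ideal (MvPolynomial (Fin 4) k)) : Set (MvPolynomial (Fin 4) k)) := fun n f hf =>
    Submodule.mem_colon.2 fun u _ => by
      rw [smul_eq_mul]; exact Ideal.mul_mem_right _ _ hf
  -- x*y is in a large enough colon
  have hxyQ : x * y ∈ J.colon ((m ^ (1 + ((p - 1) + (r + p - 2))) : Ideal (MvPolynomial (Fin 4) k)) : Set (MvPolynomial (Fin 4) k)) := by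
    have hmQ : m ^ (1 + ((p - 1) + (r + p - 2))) ≤ J.colon (Ideal.span {x * y}) := by
      have hm : m = (Ideal.span {x} + Ideal.span {y})
          + (Ideal.span {z} + Ideal.span {w}) := by
        simp only [m, Ideal.span_insert, Submodule.add_eq_sup, sup_assoc]
      have step1 : m ^ (1 + ((p - 1) + (r + p - 2))) ≤
          (Ideal.span {x} + Ideal.span {y}) ^ 1
            + (Ideal.span {z} + Ideal.span {w}) ^ ((p - 1) + (r + p - 2)) := by
        rw [hm]; exact ideal_add_pow_le _ _ 1 _
      refine step1.trans ?_
      have h1 : (Ideal.span {x} + Ideal.span {y}) ^ 1 ≤ J.colon (Ideal.span {x * y}) := by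
        rw [pow_one, Submodule.add_eq_sup]
        refine sup_le ((Ideal.span_singleton_le_iff_mem _).2 ?_) ((Ideal.span_singleton_le_iff_mem _).2 ?_)
        · refine Ideal.mem_colon_span_singleton.2 ?_
          rw [show x * (x * y) = x ^ 2 * y by ring]
          exact Ideal.mul_mem_right _ _ (Ideal.subset_span (by simp))
        · refine Ideal.mem_colon_span_singleton.2 ?_
          rw [show y * (x * y) = x * y ^ 2 by ring]
          exact Ideal.subset_span (by simp)
      have h2 : (Ideal.span {z} + Ideal.span {w}) ^ ((p - 1) + (r + p - 2))
          ≤ J.colon (Ideal.span {x * y}) := by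
        refine (ideal_add_pow_le _ _ _ _).trans ?_
        rw [Submodule.add_eq_sup, Ideal.span_singleton_pow, Ideal.span_singleton_pow]
        refine sup_le ((Ideal.span_singleton_le_iff_mem _).2 ?_) ((Ideal.span_singleton_le_iff_mem _).2 ?_)
        · refine Ideal.mem_colon_span_singleton.2 ?_
          rw [show z ^ (p - 1) * (x * y) = x * y * z ^ (p - 1) by ring]
          exact Ideal.subset_span (by simp)
        · refine Ideal.mem_colon_span_singleton.2 ?_
          rw [show w ^ (r + p - 2) * (x * y) = x * y * w ^ (r + p - 2) by ring]
          exact Ideal.subset_span (by simp)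
      rw [Submodule.add_eq_sup]
      exact sup_le h1 h2
    refine Submodule.mem_colon.2 fun u hu => ?_
    have := Ideal.mem_colon_span_singleton.1 (hmQ hu)
    rw [smul_eq_mul, mul_comm]
    exact this
  have colonpow : ∀ n, J.colon ((m ^ n : Ideal (MvPolynomial (Fin 4) k)) : Set (MvPolynomial (Fin 4) k)) ≤ I := by
    intro n
    induction n with
    | zero =>
      intro f hf
      have := Submodule.mem_colon.1 hf 1
        (by rw [pow_zero, Ideal.one_eq_top]; exact Submodule.mem_top)
      rw [smul_eq_mul, mul_one] at this
      exact hJI this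
    | succ n ih =>
      intro f hf
      apply key f
      apply ih
      refine Submodule.mem_colon.2 fun u hu => ?_
      have h2 : u * z ∈ m ^ (n + 1) := by
        rw [pow_succ]; exact Ideal.mul_mem_mul hu hzm
      have h3 := Submodule.mem_colon.1 hf (u * z) h2
      rw [smul_eq_mul] at h3 ⊢
      rw [show z * f * u = f * (u * z) by ring]
      exact h3
  refine ⟨hJI, ?_, ?_⟩
  · apply le_antisymm
    · rw [Ideal.span_le]
      intro v hv
      simp only [Set.mem_insert_iff, Set.mem_singleton_iff] at hv
      rw [SetLike.mem_coe]
      rcases hv with rfl | rfl | rfl | rfl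
      · exact (le_iSup (fun n => J.colon ((m ^ n : Ideal (MvPolynomial (Fin 4) k)) : Set (MvPolynomial (Fin 4) k))) 0)
          (JleC 0 (Ideal.subset_span (by simp)))
      · exact (le_iSup (fun n => J.colon ((m ^ n : Ideal (MvPolynomial (Fin 4) k)) : Set (MvPolynomial (Fin 4) k))) (1 + ((p - 1) + (r + p - 2)))) hxyQ
      · exact (le_iSup (fun n => J.colon ((m ^ n : Ideal (MvPolynomial (Fin 4) k)) : Set (MvPolynomial (Fin 4) k))) 0)
          (JleC 0 (Ideal.subset_span (by simp)))
      · exact (le_iSup (fun n => J.colon ((m ^ n : Ideal (MvPolynomial (Fin 4) k)) : Set (MvPolynomial (Fin 4) k))) 0)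
          (JleC 0 (Ideal.subset_span (by simp)))
    · exact iSup_le colonpow
  · apply le_antisymm
    · intro f hf
      apply key f
      have := Submodule.mem_colon.1 hf z hzm
      rwa [smul_eq_mul, mul_comm] at this
    · intro f hf
      exact Submodule.mem_colon.2 fun u _ => by
        rw [smul_eq_mul]; exact Ideal.mul_mem_right _ _ hf
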